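/- Let ω(t) = (4/|w|²)√-1 dw∧dw̄ + ((2+t/2)/y²)√-1 dz∧dz̄ + (2i/(yw))√-1 dw∧dz̄ - (2i/(yw̄))√-1 dz∧dw̄ on H×ℂ*. Then det(g(t)) = (1+t/2)·4/(y²|w|²), ω(t) is a positive-definite Hermitian metric for all t ≥ 0, and ∂ω(t)/∂t = -Ric(ω(t)); i.e., ω(t) solves the Chern-Ricci flow for all t ∈ [0,∞). -/

import Mathlib

open Complex
open scoped ComplexOrder

/-- Wirtinger derivative `∂/∂z_i` (i = 0 is `z`, i = 1 is `w`) on `ℂ × ℂ`. -/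
noncomputable def wd (i : Fin 2) (f : ℂ × ℂ → ℂ) (p : ℂ × ℂ) : ℂ :=
  if i = 0 then (fderiv ℝ f p (1, 0) - Complex.I * fderiv ℝ f p (Complex.I, 0)) / 2
  else (fderiv ℝ f p (0, 1) - Complex.I * fderiv ℝ f p (0, Complex.I)) / 2

/-- Wirtinger derivative `∂/∂z̄_i` on `ℂ × ℂ`. -/
noncomputable def wdb (i : Fin 2) (f : ℂ × ℂ → ℂ) (p : ℂ × ℂ) : ℂ :=
  if i = 0 then (fderiv ℝ f p (1, 0) + Complex.I * fderiv ℝ f p (Complex.I, 0)) / 2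
  else (fderiv ℝ f p (0, 1) + Complex.I * fderiv ℝ f p (0, Complex.I)) / 2

/-- The coefficient matrix of
`ω(t) = (4/|w|²)√-1 dw∧dw̄ + ((2+t/2)/y²)√-1 dz∧dz̄ + (2i/(yw))√-1 dw∧dz̄ - (2i/(yw̄))√-1 dz∧dw̄`
on `H×ℂ*` (index 0 = `z`, index 1 = `w`). -/
noncomputable def gVt (t : ℝ) (p : ℂ × ℂ) : Matrix (Fin 2) (Fin 2) ℂ :=
  !![(((2 + t / 2) / p.1.im ^ 2 : ℝ) : ℂ), -2 * Complex.I / ((p.1.im : ℂ) * (starRingEnd ℂ) p.2);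
     2 * Complex.I / ((p.1.im : ℂ) * p.2), ((4 / Complex.normSq p.2 : ℝ) : ℂ)]

namespace Stmt12Aux

/-- the open set `H × ℂ*` -/
def U : Set (ℂ × ℂ) := {q | 0 < q.1.im ∧ q.2 ≠ 0}

lemma isOpen_U : IsOpen U := by
  have h1 : IsOpen {q : ℂ × ℂ | 0 < q.1.im} :=
    isOpen_lt continuous_const (Complex.continuous_im.comp continuous_fst)
  have h2 : IsOpen {q : ℂ × ℂ | q.2 ≠ 0} :=
    isOpen_ne_fun continuous_snd continuous_const
  exact h1.inter h2

/-- the CLM `q ↦ q.1.im` -/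
noncomputable def imz : ℂ × ℂ →L[ℝ] ℝ := Complex.imCLM.comp (ContinuousLinearMap.fst ℝ ℂ ℂ)
noncomputable def re2 : ℂ × ℂ →L[ℝ] ℝ := Complex.reCLM.comp (ContinuousLinearMap.snd ℝ ℂ ℂ)
noncomputable def im2 : ℂ × ℂ →L[ℝ] ℝ := Complex.imCLM.comp (ContinuousLinearMap.snd ℝ ℂ ℂ)

variable {C : ℝ} {q : ℂ × ℂ}

/-- the log-det function -/
noncomputable def f (C : ℝ) (q : ℂ × ℂ) : ℂ :=
  ((Real.log (C / (q.1.im ^ 2 * Complex.normSq q.2)) : ℝ) : ℂ)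

noncomputable def F (C : ℝ) (q : ℂ × ℂ) : ℂ :=
  ((Real.log C - (2 * Real.log q.1.im + Real.log (Complex.normSq q.2)) : ℝ) : ℂ)

lemma f_eqOn (hC : 0 < C) : ∀ q ∈ U, f C q = F C q := by
  rintro q ⟨h1, h2⟩
  have hns : 0 < Complex.normSq q.2 := Complex.normSq_pos.mpr h2
  unfold f F
  rw [Real.log_div hC.ne' (by positivity), Real.log_mul (by positivity) hns.ne',
    Real.log_pow]
  push_cast
  ring

lemma hasFDerivAt_F (h1 : 0 < q.1.im) (h2 : q.2 ≠ 0) :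
    HasFDerivAt (F C)
      (Complex.ofRealCLM.comp
        (-(2 • ((q.1.im)⁻¹ • imz) +
           (Complex.normSq q.2)⁻¹ •
             ((q.2.re • re2 + q.2.re • re2) + (q.2.im • im2 + q.2.im • im2))))) q := by
  have hns : Complex.normSq q.2 ≠ 0 := (Complex.normSq_pos.mpr h2).ne'
  have him : HasFDerivAt (fun q : ℂ × ℂ => q.1.im) imz q := imz.hasFDerivAt
  have hlogy : HasFDerivAt (fun q : ℂ × ℂ => Real.log q.1.im) ((q.1.im)⁻¹ • imz) q :=
    by have := (Real.hasDerivAt_log h1.ne').comp_hasFDerivAt q him; exact this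
  have hre : HasFDerivAt (fun q : ℂ × ℂ => q.2.re) re2 q := re2.hasFDerivAt
  have him2 : HasFDerivAt (fun q : ℂ × ℂ => q.2.im) im2 q := im2.hasFDerivAt
  have hNS : HasFDerivAt (fun q : ℂ × ℂ => Complex.normSq q.2)
      ((q.2.re • re2 + q.2.re • re2) + (q.2.im • im2 + q.2.im • im2)) q := by
    have := (hre.mul hre).add (him2.mul him2)
    simpa [Complex.normSq_apply, Pi.mul_def, Pi.add_def] using this
  have hlogNS : HasFDerivAt (fun q : ℂ × ℂ => Real.log (Complex.normSq q.2))
      ((Complex.normSq q.2)⁻¹ •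
        ((q.2.re • re2 + q.2.re • re2) + (q.2.im • im2 + q.2.im • im2))) q :=
    by have := (Real.hasDerivAt_log hns).comp_hasFDerivAt q hNS; exact this
  have hG : HasFDerivAt
      (fun q : ℂ × ℂ => Real.log C - (2 * Real.log q.1.im + Real.log (Complex.normSq q.2)))
      (-(2 • ((q.1.im)⁻¹ • imz) +
        (Complex.normSq q.2)⁻¹ •
          ((q.2.re • re2 + q.2.re • re2) + (q.2.im • im2 + q.2.im • im2)))) q := by
    have h := ((hlogy.const_mul (2:ℝ)).add hlogNS).const_sub (Real.log C)
    exact h.congr_fderiv (by module)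
  exact Complex.ofRealCLM.hasFDerivAt.comp q hG

lemma fderiv_f (hC : 0 < C) (h1 : 0 < q.1.im) (h2 : q.2 ≠ 0) :
    fderiv ℝ (f C) q =
      Complex.ofRealCLM.comp
        (-(2 • ((q.1.im)⁻¹ • imz) +
           (Complex.normSq q.2)⁻¹ •
             ((q.2.re • re2 + q.2.re • re2) + (q.2.im • im2 + q.2.im • im2)))) := by
  have hev : f C =ᶠ[nhds q] F C :=
    Filter.eventuallyEq_of_mem (isOpen_U.mem_nhds ⟨h1, h2⟩) (f_eqOn hC)
  rw [hev.fderiv_eq, (hasFDerivAt_F h1 h2).fderiv]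

lemma wdb0_f (hC : 0 < C) (h1 : 0 < q.1.im) (h2 : q.2 ≠ 0) :
    wdb 0 (f C) q = -Complex.I / (q.1.im : ℂ) := by
  have hy : (q.1.im : ℂ) ≠ 0 := by exact_mod_cast h1.ne'
  rw [wdb, if_pos rfl, fderiv_f hC h1 h2]
  simp [imz, re2, im2]
  field_simp

lemma wdb1_f (hC : 0 < C) (h1 : 0 < q.1.im) (h2 : q.2 ≠ 0) :
    wdb 1 (f C) q = -((starRingEnd ℂ) q.2)⁻¹ := by
  have hns : Complex.normSq q.2 ≠ 0 := (Complex.normSq_pos.mpr h2).ne'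
  have hwc : (starRingEnd ℂ) q.2 ≠ 0 := by simpa using h2
  rw [wdb, if_neg (by decide), fderiv_f hC h1 h2]
  simp [imz, re2, im2]
  have key : -((starRingEnd ℂ) q.2)⁻¹ = -q.2 * (((Complex.normSq q.2 : ℝ)) : ℂ)⁻¹ := by
    rw [Complex.normSq_eq_conj_mul_self]
    field_simp
  rw [key]
  set a := (((Complex.normSq q.2 : ℝ)) : ℂ)⁻¹ with ha
  conv_rhs => rw [← Complex.re_add_im q.2]
  ring

noncomputable def cs : ℂ × ℂ →L[ℝ] ℂ :=
  Complex.conjCLE.toContinuousLinearMap.comp (ContinuousLinearMap.snd ℝ ℂ ℂ)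

lemma fderiv_wdb0 (hC : 0 < C) (h1 : 0 < q.1.im) (h2 : q.2 ≠ 0) :
    fderiv ℝ (wdb 0 (f C)) q
      = (-Complex.I) • (Complex.ofRealCLM.comp ((-(q.1.im ^ 2)⁻¹) • imz)) := by
  have hev : wdb 0 (f C) =ᶠ[nhds q] (fun q => -Complex.I * ((q.1.im⁻¹ : ℝ) : ℂ)) := by
    refine Filter.eventuallyEq_of_mem (isOpen_U.mem_nhds ⟨h1, h2⟩) ?_
    rintro q ⟨ha, hb⟩
    rw [wdb0_f hC ha hb]
    simp [div_eq_mul_inv]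
  rw [hev.fderiv_eq]
  have hinv : HasFDerivAt (fun q : ℂ × ℂ => (q.1.im)⁻¹) ((-(q.1.im ^ 2)⁻¹) • imz) q :=
    (hasDerivAt_inv h1.ne').comp_hasFDerivAt q imz.hasFDerivAt
  have hc : HasFDerivAt (fun q : ℂ × ℂ => ((q.1.im⁻¹ : ℝ) : ℂ))
      (Complex.ofRealCLM.comp ((-(q.1.im ^ 2)⁻¹) • imz)) q :=
    Complex.ofRealCLM.hasFDerivAt.comp q hinv
  exact (hc.const_mul (-Complex.I)).fderiv

lemma fderiv_wdb1 (hC : 0 < C) (h1 : 0 < q.1.im) (h2 : q.2 ≠ 0) :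
    fderiv ℝ (wdb 1 (f C)) q
      = -((-(((starRingEnd ℂ) q.2) ^ 2)⁻¹) • cs) := by
  have hwc : (starRingEnd ℂ) q.2 ≠ 0 := by simpa using h2
  have hev : wdb 1 (f C) =ᶠ[nhds q] (fun q => -((starRingEnd ℂ) q.2)⁻¹) := by
    refine Filter.eventuallyEq_of_mem (isOpen_U.mem_nhds ⟨h1, h2⟩) ?_
    rintro q ⟨ha, hb⟩
    exact wdb1_f hC ha hb
  rw [hev.fderiv_eq]
  have hcs : HasFDerivAt (fun q : ℂ × ℂ => (starRingEnd ℂ) q.2) cs q := cs.hasFDerivAt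
  have hinv : HasFDerivAt (fun q : ℂ × ℂ => ((starRingEnd ℂ) q.2)⁻¹)
      ((-(((starRingEnd ℂ) q.2) ^ 2)⁻¹) • cs) q :=
    (hasDerivAt_inv hwc).comp_hasFDerivAt q hcs
  exact hinv.neg.fderiv

lemma wd_wdb_00 (hC : 0 < C) (h1 : 0 < q.1.im) (h2 : q.2 ≠ 0) :
    wd 0 (wdb 0 (f C)) q = 1 / (2 * (q.1.im : ℂ) ^ 2) := by
  have hy : (q.1.im : ℂ) ≠ 0 := by exact_mod_cast h1.ne'
  rw [wd, if_pos rfl, fderiv_wdb0 hC h1 h2]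
  simp [imz]
  ring_nf
  rw [Complex.I_sq]
  ring

lemma wd_wdb_10 (hC : 0 < C) (h1 : 0 < q.1.im) (h2 : q.2 ≠ 0) :
    wd 1 (wdb 0 (f C)) q = 0 := by
  rw [wd, if_neg (by decide), fderiv_wdb0 hC h1 h2]
  simp [imz]

lemma wd_wdb_01 (hC : 0 < C) (h1 : 0 < q.1.im) (h2 : q.2 ≠ 0) :
    wd 0 (wdb 1 (f C)) q = 0 := by
  rw [wd, if_pos rfl, fderiv_wdb1 hC h1 h2]
  simp [cs]

lemma wd_wdb_11 (hC : 0 < C) (h1 : 0 < q.1.im) (h2 : q.2 ≠ 0) :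
    wd 1 (wdb 1 (f C)) q = 0 := by
  rw [wd, if_neg (by decide), fderiv_wdb1 hC h1 h2]
  simp [cs, Complex.conjCLE]
  ring_nf
  rw [Complex.I_sq]
  ring

end Stmt12Aux

set_option maxHeartbeats 2000000 in
/-- On `H×ℂ*`, `ω(t)` above satisfies
`det g(t) = (1+t/2)·4/(y²|w|²)`, it is a positive-definite Hermitian metric for all
`t ≥ 0`, and `∂ω(t)/∂t = -Ric(ω(t)) = √-1 ∂∂̄ log det g(t)` entrywise; i.e. `ω(t)`
solves the Chern-Ricci flow on `[0,∞)`. -/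
theorem stmt12 (t : ℝ) (ht : 0 ≤ t) (p : ℂ × ℂ) (hp : 0 < p.1.im) (hw : p.2 ≠ 0) :
    ((gVt t p).det = (((1 + t / 2) * 4 / (p.1.im ^ 2 * Complex.normSq p.2) : ℝ) : ℂ)) ∧
    (gVt t p).PosDef ∧
    (∀ i j : Fin 2,
      deriv (fun s : ℝ => gVt s p i j) t
        = wd i (wdb j (fun q =>
            ((Real.log ((1 + t / 2) * 4 / (q.1.im ^ 2 * Complex.normSq q.2)) : ℝ) : ℂ))) p) := by
  have hy : (p.1.im : ℂ) ≠ 0 := by exact_mod_cast hp.ne'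
  have hwc : (starRingEnd ℂ) p.2 ≠ 0 := by simpa using hw
  have hn : (Complex.normSq p.2 : ℂ) ≠ 0 := by
    exact_mod_cast (Complex.normSq_pos.mpr hw).ne'
  have hns : (0:ℝ) < Complex.normSq p.2 := Complex.normSq_pos.mpr hw
  have h2t : (0:ℝ) < 2 + t / 2 := by linarith
  have h2tc : ((2:ℂ) + (t:ℂ) / 2) ≠ 0 := by
    exact_mod_cast (show ((2 + t/2 : ℝ):ℂ) ≠ 0 by exact_mod_cast h2t.ne')
  have hC : (0:ℝ) < (1 + t / 2) * 4 := by linarith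
  refine ⟨?_, ?_, ?_⟩
  · rw [gVt, Matrix.det_fin_two_of]
    push_cast
    rw [← Complex.mul_conj]
    field_simp
    ring_nf
    simp only [Complex.I_sq]
    ring
  · rw [Matrix.posDef_iff_dotProduct_mulVec]
    constructor
    · ext i j
      fin_cases i <;> fin_cases j <;>
        simp [gVt, Matrix.conjTranspose_apply, map_div₀, Complex.conj_I, Complex.conj_ofReal]
    · intro x hx
      set e : ℝ := (2 + t / 2) / p.1.im ^ 2 with he
      have hepos : 0 < e := div_pos h2t (by positivity)
      set A : ℂ := (e : ℂ) * x 0 + (-2 * Complex.I / ((p.1.im : ℂ) * (starRingEnd ℂ) p.2)) * x 1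
        with hA
      set k : ℝ := (1 + t / 2) * 4 / ((2 + t / 2) * Complex.normSq p.2) with hk
      have hkpos : 0 < k := by positivity
      have key : dotProduct (star x) ((gVt t p).mulVec x)
          = ((e⁻¹ * Complex.normSq A + k * Complex.normSq (x 1) : ℝ) : ℂ) := by
        simp only [dotProduct, Matrix.mulVec, Fin.sum_univ_two, gVt, Pi.star_apply,
          Matrix.cons_val', Matrix.cons_val_zero, Matrix.cons_val_one, Matrix.head_cons,
          Matrix.empty_val', Matrix.cons_val_fin_one, Matrix.head_fin_const, RCLike.star_def, Matrix.of_apply]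
        rw [hA, hk, he]
        push_cast [Complex.normSq_eq_conj_mul_self]
        simp only [map_add, map_mul, map_div₀, Complex.conj_I, Complex.conj_ofReal, map_ofNat,
          map_neg, Complex.conj_conj, map_pow]
        field_simp
        ring_nf
        simp only [Complex.I_sq]
        ring
      rw [key, Complex.zero_lt_real]
      by_cases hv : x 1 = 0
      · have hu : x 0 ≠ 0 := by
          intro hu; apply hx; funext i; fin_cases i <;> assumption
        have hA0 : A ≠ 0 := by
          rw [hA, hv]; simpa using mul_ne_zero (Complex.ofReal_ne_zero.mpr hepos.ne') hu
        have : 0 < Complex.normSq A := Complex.normSq_pos.mpr hA0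
        have : 0 < e⁻¹ * Complex.normSq A := by positivity
        nlinarith [Complex.normSq_nonneg (x 1)]
      · have : 0 < Complex.normSq (x 1) := Complex.normSq_pos.mpr hv
        nlinarith [Complex.normSq_nonneg A, inv_pos.mpr hepos]
  · have hfC : (fun q : ℂ × ℂ =>
        ((Real.log ((1 + t / 2) * 4 / (q.1.im ^ 2 * Complex.normSq q.2)) : ℝ) : ℂ))
        = Stmt12Aux.f ((1 + t / 2) * 4) := rfl
    rw [hfC]
    simp only [Fin.forall_fin_two]
    refine ⟨⟨?_, ?_⟩, ?_, ?_⟩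
    · -- (0,0)
      rw [show wd 0 (wdb 0 (Stmt12Aux.f ((1 + t / 2) * 4))) p = 1 / (2 * (p.1.im : ℂ) ^ 2) from
        Stmt12Aux.wd_wdb_00 hC hp hw]
      have hd : HasDerivAt (fun s : ℝ => (((2 + s / 2) / p.1.im ^ 2 : ℝ) : ℂ))
          (((1 / 2 / p.1.im ^ 2 : ℝ) : ℂ)) t := by
        have : HasDerivAt (fun s : ℝ => (2 + s / 2) / p.1.im ^ 2) (1 / 2 / p.1.im ^ 2) t := by
          simpa using (((hasDerivAt_id t).div_const 2).const_add 2).div_const (p.1.im ^ 2)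
        exact this.ofReal_comp
      have : deriv (fun s : ℝ => gVt s p 0 0) t = (((1 / 2 / p.1.im ^ 2 : ℝ) : ℂ)) := by
        have heq : (fun s : ℝ => gVt s p 0 0)
            = fun s : ℝ => (((2 + s / 2) / p.1.im ^ 2 : ℝ) : ℂ) := by
          funext s; simp [gVt]
        rw [heq, hd.deriv]
      rw [this]
      push_cast
      field_simp
    · -- (0,1)
      rw [show wd 0 (wdb 1 (Stmt12Aux.f ((1 + t / 2) * 4))) p = 0 from Stmt12Aux.wd_wdb_01 hC hp hw]
      have heq : (fun s : ℝ => gVt s p 0 1)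
          = fun _ : ℝ => -2 * Complex.I / ((p.1.im : ℂ) * (starRingEnd ℂ) p.2) := by
        funext s; simp [gVt]
      rw [heq, deriv_const]
    · -- (1,0)
      rw [show wd 1 (wdb 0 (Stmt12Aux.f ((1 + t / 2) * 4))) p = 0 from Stmt12Aux.wd_wdb_10 hC hp hw]
      have heq : (fun s : ℝ => gVt s p 1 0)
          = fun _ : ℝ => 2 * Complex.I / ((p.1.im : ℂ) * p.2) := by
        funext s; simp [gVt]
      rw [heq, deriv_const]
    · -- (1,1)
      rw [show wd 1 (wdb 1 (Stmt12Aux.f ((1 + t / 2) * 4))) p = 0 from Stmt12Aux.wd_wdb_11 hC hp hw]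
      have heq : (fun s : ℝ => gVt s p 1 1)
          = fun _ : ℝ => ((4 / Complex.normSq p.2 : ℝ) : ℂ) := by
        funext s; simp [gVt]
      rw [heq, deriv_const]
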